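/- With f as above (principal-branch antiderivative of the rational potential u_0), for each fixed m ∈ {0, 1, ..., P}, the limit of f(x) as x → ∞ along any path remaining in the region G_m (points x of large modulus whose argument places them between the upward branch cuts emanating from z_m and z_{m+1}, in the upper half-plane) equals 2πi Σ_{p=1}^m c_p. In particular, for x → -∞ along the real axis (m = 0) the limit is 0, and for x → +∞ along the real axis (m = P) the limit is 2πi Σ_{p=1}^P c_p. -/

import Mathlib

open Complex Filter Finset
open scoped Real Topology

/-- The region `G_m`: for `m = 0` the half-plane left of `Re z₁`, for `m = P` the
half-plane right of `Re z_P`, and for `0 < m < P` the part of the upper half-plane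
strictly between the upward branch cuts emanating from `z_m` and `z_{m+1}`. -/
def Gregion (P : ℕ) (z : ℕ → ℂ) (m : ℕ) : Set ℂ :=
  if m = 0 then {x | x.re < (z 1).re}
  else if m = P then {x | (z P).re < x.re}
  else {x | 0 < x.im ∧ (z m).re < x.re ∧ x.re < (z (m + 1)).re}

private lemma ne_zero_of_re_pos {w : ℂ} (h : 0 < w.re) : w ≠ 0 := by
  intro h0; rw [h0] at h; simp at h

private lemma ne_zero_of_im_pos {w : ℂ} (h : 0 < w.im) : w ≠ 0 := by
  intro h0; rw [h0] at h; simp at h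

/-- `Log (I w) = Log w + iπ/2` for `Re w > 0`. -/
private lemma logA {w : ℂ} (h : 0 < w.re) : Complex.log (I * w) = Complex.log w + (π : ℂ) * I / 2 := by
  have hw : w ≠ 0 := _root_.ne_zero_of_re_pos h
  have h2 := Complex.abs_arg_lt_pi_div_two_iff.2 (Or.inl h)
  rw [abs_lt] at h2
  have harg : Complex.arg I + Complex.arg w ∈ Set.Ioc (-π) π := by
    rw [Complex.arg_I]
    constructor
    · linarith [Real.pi_pos]
    · linarith [h2.2]
  rw [Complex.log_mul Complex.I_ne_zero hw harg, Complex.log_I]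
  ring

/-- `Log (-I w) = Log w - iπ/2` for `Re w > 0` or `Im w > 0`. -/
private lemma logB {w : ℂ} (h : 0 < w.re ∨ 0 < w.im) :
    Complex.log (-I * w) = Complex.log w - (π : ℂ) * I / 2 := by
  have hw : w ≠ 0 := h.elim _root_.ne_zero_of_re_pos ne_zero_of_im_pos
  have harg : Complex.arg (-I) + Complex.arg w ∈ Set.Ioc (-π) π := by
    rw [Complex.arg_neg_I]
    have hlow : -(π / 2) < Complex.arg w :=
      Complex.neg_pi_div_two_lt_arg_iff.2 (h.imp id fun h => h.le)
    have hup : Complex.arg w ≤ π := Complex.arg_le_pi w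
    constructor
    · linarith
    · linarith [Real.pi_pos]
  rw [Complex.log_mul (by simp [Complex.I_ne_zero]) hw harg, Complex.log_neg_I]
  ring

/-- `Log (-w) = Log w - iπ` for `Im w > 0`. -/
private lemma logD {w : ℂ} (h : 0 < w.im) : Complex.log (-w) = Complex.log w - (π : ℂ) * I := by
  have hw : w ≠ 0 := ne_zero_of_im_pos h
  have hnegim : (-w).im < 0 := by simp [h]
  have harg : Complex.arg (-1 : ℂ) + Complex.arg (-w) ∈ Set.Ioc (-π) π := by
    rw [Complex.arg_neg_one]
    have h1 : Complex.arg (-w) < 0 := Complex.arg_neg_iff.2 hnegim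
    have h2 : -π < Complex.arg (-w) := Complex.neg_pi_lt_arg _
    constructor
    · linarith [Real.pi_pos]
    · linarith
  have hkey : Complex.log ((-1 : ℂ) * (-w)) = Complex.log (-1) + Complex.log (-w) :=
    Complex.log_mul (by norm_num) (neg_ne_zero.2 hw) harg
  rw [show (-1 : ℂ) * (-w) = w by ring, Complex.log_neg_one] at hkey
  rw [hkey]; ring

private lemma log_div_sub {u v : ℂ} (hu : u ≠ 0) (hv : v ≠ 0)
    (h1 : -π < Complex.arg u - Complex.arg v) (h2 : Complex.arg u - Complex.arg v ≤ π)
    (h3 : Complex.arg v ≠ π) :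
    Complex.log (u / v) = Complex.log u - Complex.log v := by
  have harg : Complex.arg u + Complex.arg v⁻¹ ∈ Set.Ioc (-π) π := by
    rw [Complex.arg_inv, if_neg h3]
    constructor
    · linarith
    · linarith
  rw [div_eq_mul_inv, Complex.log_mul hu (inv_ne_zero hv) harg, Complex.log_inv v h3]
  ring

/-- `Log (u/v) = Log u - Log v` when `u, v` are in the open right half-plane. -/
private lemma log_div_right {u v : ℂ} (hu : 0 < u.re) (hv : 0 < v.re) :
    Complex.log (u / v) = Complex.log u - Complex.log v := by
  have h1 := Complex.abs_arg_lt_pi_div_two_iff.2 (Or.inl hu)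
  have h2 := Complex.abs_arg_lt_pi_div_two_iff.2 (Or.inl hv)
  rw [abs_lt] at h1 h2
  exact log_div_sub (_root_.ne_zero_of_re_pos hu) (_root_.ne_zero_of_re_pos hv)
    (by linarith [h1.1, h2.2]) (by linarith [h1.2, h2.1])
    (by intro hp; linarith [h2.2, Real.pi_pos])

/-- `Log (u/v) = Log u - Log v` when `u, v` are in the open upper half-plane. -/
private lemma log_div_upper {u v : ℂ} (hu : 0 < u.im) (hv : 0 < v.im) :
    Complex.log (u / v) = Complex.log u - Complex.log v := by
  have hu0 : 0 < Complex.arg u := by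
    rcases lt_or_eq_of_le (Complex.arg_nonneg_iff.2 hu.le) with h | h
    · exact h
    · exact absurd (Complex.arg_eq_zero_iff.1 h.symm).2 hu.ne'
  have hv0 : 0 < Complex.arg v := by
    rcases lt_or_eq_of_le (Complex.arg_nonneg_iff.2 hv.le) with h | h
    · exact h
    · exact absurd (Complex.arg_eq_zero_iff.1 h.symm).2 hv.ne'
  have hu1 : Complex.arg u < π := Complex.arg_lt_pi_iff.2 (Or.inr hu.ne')
  have hv1 : Complex.arg v < π := Complex.arg_lt_pi_iff.2 (Or.inr hv.ne')
  exact log_div_sub (ne_zero_of_im_pos hu) (ne_zero_of_im_pos hv)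
    (by linarith) (by linarith) (by intro hp; linarith)

private lemma tendsto_sub_cobounded (b : ℂ) :
    Tendsto (fun x : ℂ => x - b) (Bornology.cobounded ℂ) (Bornology.cobounded ℂ) := by
  rw [← tendsto_norm_atTop_iff_cobounded]
  apply tendsto_atTop_mono (fun x => norm_sub_norm_le x b)
  simpa [sub_eq_add_neg] using
    tendsto_atTop_add_const_right (Bornology.cobounded ℂ) (-‖b‖) tendsto_norm_cobounded_atTop

private lemma logratio (a b : ℂ) :
    Tendsto (fun x : ℂ => Complex.log ((x - a) / (x - b))) (Bornology.cobounded ℂ) (𝓝 0) := by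
  have h1 : Tendsto (fun x : ℂ => (x - a) / (x - b)) (Bornology.cobounded ℂ) (𝓝 1) := by
    have h0 : Tendsto (fun x : ℂ => 1 + (b - a) * (x - b)⁻¹) (Bornology.cobounded ℂ)
        (𝓝 (1 + (b - a) * 0)) :=
      tendsto_const_nhds.add
        (tendsto_const_nhds.mul (tendsto_inv₀_cobounded.comp (tendsto_sub_cobounded b)))
    rw [mul_zero, add_zero] at h0
    apply h0.congr'
    filter_upwards [eventually_cobounded_le_norm (‖b‖ + 1)] with x hx
    have hxb : x - b ≠ 0 := by
      intro h
      rw [sub_eq_zero] at h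
      rw [h] at hx
      linarith
    field_simp
    ring
  have hc : ContinuousAt Complex.log 1 := continuousAt_clog Complex.one_mem_slitPlane
  have := hc.tendsto.comp h1
  rwa [Complex.log_one] at this

theorem stmt3 (P : ℕ) (c z : ℕ → ℂ)
    (hc : ∀ p ∈ Finset.Icc 1 P, c p ≠ 0)
    (hzim : ∀ p ∈ Finset.Icc 1 P, 0 < (z p).im)
    (hzre : ∀ p ∈ Finset.Icc 1 P, ∀ q ∈ Finset.Icc 1 P, p < q → (z p).re < (z q).re)
    (hsum : ∑ p ∈ Finset.Icc 1 P, (c p + (starRingEnd ℂ) (c p)) = 0)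
    (f : ℂ → ℂ)
    (hf : ∀ x : ℂ, f x = ∑ p ∈ Finset.Icc 1 P,
      (c p * (Complex.log (I * (x - z p)) + (π : ℂ) * I / 2)
        + (starRingEnd ℂ) (c p) * (Complex.log (-I * (x - (starRingEnd ℂ) (z p))) - (π : ℂ) * I / 2))) :
    (∀ m ≤ P, Tendsto f ((Bornology.cobounded ℂ) ⊓ 𝓟 (Gregion P z m))
        (nhds (2 * (π : ℂ) * I * ∑ p ∈ Finset.Icc 1 m, c p))) ∧
    Tendsto (fun x : ℝ => f x) atBot (nhds 0) ∧
    Tendsto (fun x : ℝ => f x) atTop (nhds (2 * (π : ℂ) * I * ∑ p ∈ Finset.Icc 1 P, c p)) := by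
  have main : ∀ m ≤ P, Tendsto f ((Bornology.cobounded ℂ) ⊓ 𝓟 (Gregion P z m))
      (nhds (2 * (π : ℂ) * I * ∑ p ∈ Finset.Icc 1 m, c p)) := by
    intro m hm
    rcases Nat.eq_zero_or_pos P with hP0 | hP
    · subst hP0
      have hm0 : m = 0 := Nat.le_zero.mp hm
      subst hm0
      have hf0 : f = fun _ => 0 := funext fun x => by rw [hf x]; simp
      rw [hf0]
      simpa using tendsto_const_nhds
    · have h1P : (1 : ℕ) ∈ Finset.Icc 1 P := Finset.mem_Icc.mpr ⟨le_refl 1, hP⟩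
      set l := (Bornology.cobounded ℂ) ⊓ 𝓟 (Gregion P z m) with hl
      have hS : Tendsto (fun x : ℂ => ∑ p ∈ Finset.Icc 1 P,
          (c p * Complex.log ((x - z p) / (x - z 1))
            + (starRingEnd ℂ) (c p) * Complex.log ((x - (starRingEnd ℂ) (z p)) / (x - z 1)))) l
          (nhds 0) := by
        have h0 : Tendsto (fun x : ℂ => ∑ p ∈ Finset.Icc 1 P,
            (c p * Complex.log ((x - z p) / (x - z 1))
              + (starRingEnd ℂ) (c p) * Complex.log ((x - (starRingEnd ℂ) (z p)) / (x - z 1))))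
            (Bornology.cobounded ℂ)
            (nhds (∑ p ∈ Finset.Icc 1 P, (c p * 0 + (starRingEnd ℂ) (c p) * 0))) :=
          tendsto_finset_sum _ fun p _ =>
            (tendsto_const_nhds.mul (logratio (z p) (z 1))).add
              (tendsto_const_nhds.mul (logratio ((starRingEnd ℂ) (z p)) (z 1)))
        simp only [mul_zero, add_zero, Finset.sum_const_zero] at h0
        exact h0.mono_left inf_le_left
      have heq : ∀ᶠ x in l, f x = 2 * (π : ℂ) * I * (∑ p ∈ Finset.Icc 1 m, c p)
          + ∑ p ∈ Finset.Icc 1 P,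
            (c p * Complex.log ((x - z p) / (x - z 1))
              + (starRingEnd ℂ) (c p) * Complex.log ((x - (starRingEnd ℂ) (z p)) / (x - z 1))) := by
        rcases Nat.eq_zero_or_pos m with hm0 | hmpos
        · -- m = 0
          subst hm0
          have hGr : Gregion P z 0 = {x | x.re < (z 1).re} := if_pos rfl
          have hev2 : ∀ᶠ x in l, x ∈ Gregion P z 0 := by
            rw [hl]
            exact Filter.Eventually.filter_mono inf_le_right
              (eventually_principal.mpr fun x hx => hx)
          filter_upwards [hev2] with x hx
          rw [hGr] at hx
          have hx' : x.re < (z 1).re := hx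
          rw [hf x]
          have key : ∀ p ∈ Finset.Icc 1 P,
              c p * (Complex.log (I * (x - z p)) + (π : ℂ) * I / 2)
                + (starRingEnd ℂ) (c p) *
                  (Complex.log (-I * (x - (starRingEnd ℂ) (z p))) - (π : ℂ) * I / 2)
              = (c p * Complex.log ((x - z p) / (x - z 1))
                  + (starRingEnd ℂ) (c p) *
                    Complex.log ((x - (starRingEnd ℂ) (z p)) / (x - z 1)))
                + (c p + (starRingEnd ℂ) (c p)) * Complex.log (z 1 - x) := by
            intro p hp
            have hp1 : 1 ≤ p := (Finset.mem_Icc.mp hp).1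
            have hrep : x.re < (z p).re := by
              rcases eq_or_lt_of_le hp1 with h | h
              · rw [← h]; exact hx'
              · exact hx'.trans (hzre 1 h1P p hp h)
            have hre1 : 0 < (z 1 - x).re := by
              simp only [Complex.sub_re]; linarith
            have hrep' : 0 < (z p - x).re := by
              simp only [Complex.sub_re]; linarith
            have hrec : 0 < ((starRingEnd ℂ) (z p) - x).re := by
              simp only [Complex.sub_re, Complex.conj_re]; linarith
            have e1 : Complex.log (I * (x - z p)) = Complex.log (z p - x) - (π : ℂ) * I / 2 := by
              rw [show I * (x - z p) = -I * (z p - x) by ring]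
              exact logB (Or.inl hrep')
            have e2 : Complex.log (-I * (x - (starRingEnd ℂ) (z p)))
                = Complex.log ((starRingEnd ℂ) (z p) - x) + (π : ℂ) * I / 2 := by
              rw [show -I * (x - (starRingEnd ℂ) (z p)) = I * ((starRingEnd ℂ) (z p) - x) by ring]
              exact logA hrec
            have r1 : (x - z p) / (x - z 1) = (z p - x) / (z 1 - x) := by
              rw [← neg_sub (z p) x, ← neg_sub (z 1) x, neg_div_neg_eq]
            have r2 : (x - (starRingEnd ℂ) (z p)) / (x - z 1)
                = ((starRingEnd ℂ) (z p) - x) / (z 1 - x) := by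
              rw [← neg_sub ((starRingEnd ℂ) (z p)) x, ← neg_sub (z 1) x, neg_div_neg_eq]
            have e3 : Complex.log (z p - x)
                = Complex.log ((x - z p) / (x - z 1)) + Complex.log (z 1 - x) := by
              rw [r1, log_div_right hrep' hre1]; ring
            have e4 : Complex.log ((starRingEnd ℂ) (z p) - x)
                = Complex.log ((x - (starRingEnd ℂ) (z p)) / (x - z 1))
                  + Complex.log (z 1 - x) := by
              rw [r2, log_div_right hrec hre1]; ring
            rw [e1, e2, e3, e4]; ring
          rw [Finset.sum_congr rfl key, Finset.sum_add_distrib, ← Finset.sum_mul, hsum,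
            zero_mul, add_zero]
          simp
        · rcases eq_or_lt_of_le hm with hmP | hmlt
          · -- m = P
            subst hmP
            have hGr : Gregion m z m = {x | (z m).re < x.re} := by
              rw [Gregion, if_neg (by omega), if_pos rfl]
            have hmI : m ∈ Finset.Icc 1 m := Finset.mem_Icc.mpr ⟨hmpos, hm⟩
            have hev2 : ∀ᶠ x in l, x ∈ Gregion m z m := by
              rw [hl]
              exact Filter.Eventually.filter_mono inf_le_right
                (eventually_principal.mpr fun x hx => hx)
            filter_upwards [hev2] with x hx
            rw [hGr] at hx
            have hx' : (z m).re < x.re := hx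
            rw [hf x]
            have key : ∀ p ∈ Finset.Icc 1 m,
                c p * (Complex.log (I * (x - z p)) + (π : ℂ) * I / 2)
                  + (starRingEnd ℂ) (c p) *
                    (Complex.log (-I * (x - (starRingEnd ℂ) (z p))) - (π : ℂ) * I / 2)
                = (c p * Complex.log ((x - z p) / (x - z 1))
                    + (starRingEnd ℂ) (c p) *
                      Complex.log ((x - (starRingEnd ℂ) (z p)) / (x - z 1)))
                  + ((c p + (starRingEnd ℂ) (c p)) * Complex.log (x - z 1)
                    + ((π : ℂ) * I * c p - (π : ℂ) * I * (starRingEnd ℂ) (c p))) := by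
              intro p hp
              have hp1 : 1 ≤ p := (Finset.mem_Icc.mp hp).1
              have hpP : p ≤ m := (Finset.mem_Icc.mp hp).2
              have hrep : (z p).re < x.re := by
                rcases eq_or_lt_of_le hpP with h | h
                · rw [h]; exact hx'
                · exact (hzre p hp m hmI h).trans hx'
              have hre1' : (z 1).re < x.re := by
                rcases eq_or_lt_of_le hp1 with _ | _
                · rcases eq_or_lt_of_le (show (1:ℕ) ≤ m from le_trans hp1 hpP) with h | h
                  · rw [h]; exact hx'
                  · exact (hzre 1 h1P m hmI h).trans hx'
                · rcases eq_or_lt_of_le (show (1:ℕ) ≤ m from le_trans hp1 hpP) with h | h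
                  · rw [h]; exact hx'
                  · exact (hzre 1 h1P m hmI h).trans hx'
              have hrep' : 0 < (x - z p).re := by simp only [Complex.sub_re]; linarith
              have hre1 : 0 < (x - z 1).re := by simp only [Complex.sub_re]; linarith
              have hrec : 0 < (x - (starRingEnd ℂ) (z p)).re := by
                simp only [Complex.sub_re, Complex.conj_re]; linarith
              have e1 : Complex.log (I * (x - z p))
                  = Complex.log (x - z p) + (π : ℂ) * I / 2 := logA hrep'
              have e2 : Complex.log (-I * (x - (starRingEnd ℂ) (z p)))
                  = Complex.log (x - (starRingEnd ℂ) (z p)) - (π : ℂ) * I / 2 :=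
                logB (Or.inl hrec)
              have e3 : Complex.log (x - z p)
                  = Complex.log ((x - z p) / (x - z 1)) + Complex.log (x - z 1) := by
                rw [log_div_right hrep' hre1]; ring
              have e4 : Complex.log (x - (starRingEnd ℂ) (z p))
                  = Complex.log ((x - (starRingEnd ℂ) (z p)) / (x - z 1))
                    + Complex.log (x - z 1) := by
                rw [log_div_right hrec hre1]; ring
              rw [e1, e2, e3, e4]; ring
            rw [Finset.sum_congr rfl key, Finset.sum_add_distrib, Finset.sum_add_distrib,
              Finset.sum_add_distrib, ← Finset.sum_mul, hsum, zero_mul, zero_add]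
            have hconjsum : ∑ p ∈ Finset.Icc 1 m, (starRingEnd ℂ) (c p)
                = -∑ p ∈ Finset.Icc 1 m, c p := by
              rw [Finset.sum_add_distrib] at hsum
              exact eq_neg_of_add_eq_zero_right hsum
            rw [Finset.sum_sub_distrib, ← Finset.mul_sum, ← Finset.mul_sum, hconjsum]
            ring
          · -- 0 < m < P
            have hGr : Gregion P z m
                = {x | 0 < x.im ∧ (z m).re < x.re ∧ x.re < (z (m + 1)).re} := by
              rw [Gregion, if_neg (by omega), if_neg (by omega)]
            have hmI : m ∈ Finset.Icc 1 P := Finset.mem_Icc.mpr ⟨hmpos, hm⟩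
            have hm1I : m + 1 ∈ Finset.Icc 1 P := Finset.mem_Icc.mpr ⟨by omega, by omega⟩
            set A : ℝ := max |(z m).re| |(z (m + 1)).re| with hA
            set B : ℝ := (Finset.Icc 1 P).sup' ⟨1, h1P⟩ (fun p => (z p).im) with hB
            have hev1 : ∀ᶠ x in l, A + B + 1 ≤ ‖x‖ :=
              Filter.Eventually.filter_mono inf_le_left
                (eventually_cobounded_le_norm (A + B + 1))
            have hev2 : ∀ᶠ x in l, x ∈ Gregion P z m := by
              rw [hl]
              exact Filter.Eventually.filter_mono inf_le_right
                (eventually_principal.mpr fun x hx => hx)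
            filter_upwards [hev1, hev2] with x hK hx
            rw [hGr] at hx
            obtain ⟨hxim, hxl, hxr⟩ := hx
            have hAx : |x.re| ≤ A := by
              rw [abs_le]
              constructor
              · have h1 : |(z m).re| ≤ A := le_max_left _ _
                have h2 : -|(z m).re| ≤ (z m).re := neg_abs_le _
                linarith
              · have h1 : |(z (m + 1)).re| ≤ A := le_max_right _ _
                have h2 : (z (m + 1)).re ≤ |(z (m + 1)).re| := le_abs_self _
                linarith
            have hximB : ∀ p ∈ Finset.Icc 1 P, (z p).im < x.im := by
              intro p hp
              have h1 : ‖x‖ ≤ |x.re| + |x.im| := by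
                exact Complex.norm_le_abs_re_add_abs_im x
              have h2 : (z p).im ≤ B := Finset.le_sup' (fun p => (z p).im) hp
              have h3 : |x.im| = x.im := abs_of_pos hxim
              linarith
            rw [hf x]
            have key : ∀ p ∈ Finset.Icc 1 P,
                c p * (Complex.log (I * (x - z p)) + (π : ℂ) * I / 2)
                  + (starRingEnd ℂ) (c p) *
                    (Complex.log (-I * (x - (starRingEnd ℂ) (z p))) - (π : ℂ) * I / 2)
                = (c p * Complex.log ((x - z p) / (x - z 1))
                    + (starRingEnd ℂ) (c p) *
                      Complex.log ((x - (starRingEnd ℂ) (z p)) / (x - z 1)))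
                  + ((c p + (starRingEnd ℂ) (c p)) * Complex.log (x - z 1)
                    + (if p ≤ m then (π : ℂ) * I * (c p - (starRingEnd ℂ) (c p))
                       else -((π : ℂ) * I) * (c p + (starRingEnd ℂ) (c p)))) := by
              intro p hp
              have hp1 : 1 ≤ p := (Finset.mem_Icc.mp hp).1
              have hpP : p ≤ P := (Finset.mem_Icc.mp hp).2
              have himp : 0 < (x - z p).im := by
                simp only [Complex.sub_im]; linarith [hximB p hp]
              have himc : 0 < (x - (starRingEnd ℂ) (z p)).im := by
                simp only [Complex.sub_im, Complex.conj_im]; linarith [hzim p hp]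
              have himr : 0 < (x - z 1).im := by
                simp only [Complex.sub_im]; linarith [hximB 1 h1P]
              have e2 : Complex.log (-I * (x - (starRingEnd ℂ) (z p)))
                  = Complex.log (x - (starRingEnd ℂ) (z p)) - (π : ℂ) * I / 2 :=
                logB (Or.inr himc)
              have e3 : Complex.log (x - z p)
                  = Complex.log ((x - z p) / (x - z 1)) + Complex.log (x - z 1) := by
                rw [log_div_upper himp himr]; ring
              have e4 : Complex.log (x - (starRingEnd ℂ) (z p))
                  = Complex.log ((x - (starRingEnd ℂ) (z p)) / (x - z 1))
                    + Complex.log (x - z 1) := by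
                rw [log_div_upper himc himr]; ring
              by_cases hpm : p ≤ m
              · have hzpm : (z p).re ≤ (z m).re := by
                  rcases eq_or_lt_of_le hpm with h | h
                  · rw [h]
                  · exact (hzre p hp m hmI h).le
                have hrep : 0 < (x - z p).re := by
                  simp only [Complex.sub_re]; linarith
                have e1 : Complex.log (I * (x - z p))
                    = Complex.log (x - z p) + (π : ℂ) * I / 2 := logA hrep
                rw [if_pos hpm, e1, e2, e3, e4]; ring
              · have hm1p : m + 1 ≤ p := by omega
                have hzpm : (z (m + 1)).re ≤ (z p).re := by
                  rcases eq_or_lt_of_le hm1p with h | h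
                  · rw [h]
                  · exact (hzre (m + 1) hm1I p hp h).le
                have hrep : (x - z p).re < 0 := by
                  simp only [Complex.sub_re]; linarith
                have a2 : Complex.log (I * (x - z p))
                    = Complex.log (-(x - z p)) - (π : ℂ) * I / 2 := by
                  rw [show I * (x - z p) = -I * (-(x - z p)) by ring]
                  exact logB (Or.inl (by simp only [Complex.neg_re]; linarith))
                have a1 : Complex.log (-(x - z p))
                    = Complex.log (x - z p) - (π : ℂ) * I := logD himp
                rw [if_neg hpm, a2, a1, e2, e3, e4]; ring
            rw [Finset.sum_congr rfl key, Finset.sum_add_distrib, Finset.sum_add_distrib,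
              Finset.sum_add_distrib, ← Finset.sum_mul, hsum, zero_mul, zero_add]
            have hsplit : ∑ p ∈ Finset.Icc 1 P,
                (if p ≤ m then (π : ℂ) * I * (c p - (starRingEnd ℂ) (c p))
                 else -((π : ℂ) * I) * (c p + (starRingEnd ℂ) (c p)))
                = 2 * (π : ℂ) * I * ∑ p ∈ Finset.Icc 1 m, c p := by
              rw [Finset.sum_ite]
              have hf1 : Finset.filter (fun p => p ≤ m) (Finset.Icc 1 P) = Finset.Icc 1 m := by
                ext a
                simp only [Finset.mem_filter, Finset.mem_Icc]
                omega
              have hf2 : Finset.filter (fun p => ¬p ≤ m) (Finset.Icc 1 P)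
                  = Finset.Ioc m P := by
                ext a
                simp only [Finset.mem_filter, Finset.mem_Icc, Finset.mem_Ioc]
                omega
              rw [hf1, hf2]
              have hcons : (∑ p ∈ Finset.Ioc 0 m, (c p + (starRingEnd ℂ) (c p)))
                  + ∑ p ∈ Finset.Ioc m P, (c p + (starRingEnd ℂ) (c p))
                  = ∑ p ∈ Finset.Ioc 0 P, (c p + (starRingEnd ℂ) (c p)) :=
                Finset.sum_Ioc_consecutive _ (Nat.zero_le m) hm
              have hIcc0 : Finset.Icc 1 m = Finset.Ioc 0 m := Finset.Icc_add_one_left_eq_Ioc 0 m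
              have hIccP : Finset.Icc 1 P = Finset.Ioc 0 P := Finset.Icc_add_one_left_eq_Ioc 0 P
              rw [hIccP] at hsum
              have htail : ∑ p ∈ Finset.Ioc m P, (c p + (starRingEnd ℂ) (c p))
                  = -∑ p ∈ Finset.Ioc 0 m, (c p + (starRingEnd ℂ) (c p)) := by
                rw [hsum] at hcons
                exact eq_neg_of_add_eq_zero_right hcons
              rw [← Finset.mul_sum, ← Finset.mul_sum, htail, hIcc0]
              rw [Finset.sum_sub_distrib, Finset.sum_add_distrib]
              ring
            rw [hsplit]
            ring
      have hfinal : Tendsto (fun x : ℂ => 2 * (π : ℂ) * I * (∑ p ∈ Finset.Icc 1 m, c p)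
          + ∑ p ∈ Finset.Icc 1 P,
            (c p * Complex.log ((x - z p) / (x - z 1))
              + (starRingEnd ℂ) (c p) * Complex.log ((x - (starRingEnd ℂ) (z p)) / (x - z 1))))
          l (nhds (2 * (π : ℂ) * I * (∑ p ∈ Finset.Icc 1 m, c p) + 0)) :=
        tendsto_const_nhds.add hS
      rw [add_zero] at hfinal
      exact Filter.Tendsto.congr'
        (by filter_upwards [heq] with x hx; exact hx.symm) hfinal
  refine ⟨main, ?_, ?_⟩
  · -- atBot
    have h0 := main 0 (Nat.zero_le P)
    have hcomp : Tendsto (fun x : ℝ => (x : ℂ)) atBot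
        ((Bornology.cobounded ℂ) ⊓ 𝓟 (Gregion P z 0)) := by
      rw [tendsto_inf]
      constructor
      · rw [← tendsto_norm_atTop_iff_cobounded]
        have : Tendsto (fun x : ℝ => |x|) atBot atTop := tendsto_abs_atBot_atTop
        apply this.congr
        intro x
        simp
      · rw [tendsto_principal]
        have hGr : Gregion P z 0 = {x | x.re < (z 1).re} := if_pos rfl
        rw [hGr]
        filter_upwards [eventually_lt_atBot ((z 1).re)] with x hx
        simpa using hx
    have := h0.comp hcomp
    simp at this
    exact this
  · -- atTop
    rcases Nat.eq_zero_or_pos P with hP0 | hP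
    · subst hP0
      have hf0 : ∀ x : ℝ, f x = 0 := fun x => by rw [hf x]; simp
      simp only [hf0]
      simpa using tendsto_const_nhds
    · have hP' := main P (le_refl P)
      have hcomp : Tendsto (fun x : ℝ => (x : ℂ)) atTop
          ((Bornology.cobounded ℂ) ⊓ 𝓟 (Gregion P z P)) := by
        rw [tendsto_inf]
        constructor
        · rw [← tendsto_norm_atTop_iff_cobounded]
          have : Tendsto (fun x : ℝ => |x|) atTop atTop := tendsto_abs_atTop_atTop
          apply this.congr
          intro x
          simp
        · rw [tendsto_principal]
          have hGr : Gregion P z P = {x | (z P).re < x.re} := by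
            rw [Gregion, if_neg (by omega), if_pos rfl]
          rw [hGr]
          filter_upwards [eventually_gt_atTop ((z P).re)] with x hx
          simpa using hx
      exact hP'.comp hcomp
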